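/- Lemma 2 (the iterate increment controls both proximal steps). Let λ > 0, 0 < t ≤ 1/‖A‖₂², x, u ∈ ℝ^N, v = S_{λt}(x − t∇f(x)), w = S_{λt}(u − t∇f(u)), α ∈ (0, 1), and x⁺ = αv + (1 − α)w. Assume v ≠ x and set η = ‖u − x‖₂/‖v − x‖₂. Then for all real constants a > 0 and b > 0, writing c = 2a(1 − α) + 2bα, one has (a − ηc)·‖v − x‖₂ + b·‖w − x‖₂ ≤ (a + b)·‖x⁺ − x‖₂. -/

import Mathlib

/-- The Euclidean (ℓ²) norm on `Fin n → ℝ`. -/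
noncomputable def l2norm {n : ℕ} (x : Fin n → ℝ) : ℝ := Real.sqrt (∑ i, (x i) ^ 2)

/-- The ℓ¹ norm on `Fin n → ℝ`. -/
noncomputable def l1norm {n : ℕ} (x : Fin n → ℝ) : ℝ := ∑ i, |x i|

/-- The operator norm ‖A‖₂ of a matrix with respect to Euclidean norms. -/
noncomputable def opNorm {m n : ℕ} (A : Matrix (Fin m) (Fin n) ℝ) : ℝ :=
  sSup {c : ℝ | ∃ x : Fin n → ℝ, l2norm x ≤ 1 ∧ c = l2norm (A.mulVec x)}

/-- Componentwise soft-thresholding: `S_θ(z)ᵢ = sgn(zᵢ) * max (|zᵢ| - θ) 0`. -/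
noncomputable def soft {n : ℕ} (θ : ℝ) (z : Fin n → ℝ) : Fin n → ℝ :=
  fun i => Real.sign (z i) * max (|z i| - θ) 0

/-- Gradient of `f(x) = (1/2)‖Ax - b‖₂²`, namely `Aᵀ(Ax - b)`. -/
def gradf {m n : ℕ} (A : Matrix (Fin m) (Fin n) ℝ) (b : Fin m → ℝ) (x : Fin n → ℝ) :
    Fin n → ℝ :=
  A.transpose.mulVec (A.mulVec x - b)

/-- The Lasso objective `F_λ(x) = (1/2)‖Ax - b‖₂² + λ‖x‖₁`. -/
noncomputable def Flasso {m n : ℕ} (A : Matrix (Fin m) (Fin n) ℝ) (b : Fin m → ℝ)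
    (lam : ℝ) (x : Fin n → ℝ) : ℝ :=
  (1 / 2) * (l2norm (A.mulVec x - b)) ^ 2 + lam * l1norm x

/-- `s` is a subgradient of the convex function `φ` at the point `z`:
`φ(y) ≥ φ(z) + ⟨s, y - z⟩` for all `y`. -/
def IsSubgradient {n : ℕ} (φ : (Fin n → ℝ) → ℝ) (s z : Fin n → ℝ) : Prop :=
  ∀ y : Fin n → ℝ, φ z + ∑ i, s i * (y i - z i) ≤ φ y

/-! ### Auxiliary lemmas -/

/-- Transport to `EuclideanSpace`. -/
noncomputable def toE {n : ℕ} (x : Fin n → ℝ) : EuclideanSpace ℝ (Fin n) :=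
  (WithLp.equiv 2 (Fin n → ℝ)).symm x

lemma l2norm_eq_norm {n : ℕ} (x : Fin n → ℝ) : l2norm x = ‖toE x‖ := by
  rw [EuclideanSpace.norm_eq]
  simp [l2norm, toE, sq_abs]

lemma toE_add {n : ℕ} (x y : Fin n → ℝ) : toE (x + y) = toE x + toE y := rfl

lemma l2norm_nonneg' {n : ℕ} (x : Fin n → ℝ) : 0 ≤ l2norm x := Real.sqrt_nonneg _

lemma l2norm_sq' {n : ℕ} (x : Fin n → ℝ) : l2norm x ^ 2 = ∑ i, (x i) ^ 2 :=
  Real.sq_sqrt (Finset.sum_nonneg fun i _ => sq_nonneg _)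

lemma l2norm_smul' {n : ℕ} (c : ℝ) (x : Fin n → ℝ) : l2norm (c • x) = |c| * l2norm x := by
  simp only [l2norm, Pi.smul_apply, smul_eq_mul, mul_pow, ← Finset.mul_sum]
  rw [Real.sqrt_mul (sq_nonneg c), Real.sqrt_sq_eq_abs]

lemma eq_zero_of_l2norm {n : ℕ} (x : Fin n → ℝ) (h : l2norm x = 0) : x = 0 := by
  funext j
  have hsq := l2norm_sq' x
  rw [h] at hsq
  have h2 : ∑ i, (x i) ^ 2 = 0 := by simpa using hsq.symm
  have h3 := (Finset.sum_eq_zero_iff_of_nonneg (fun i _ => sq_nonneg (x i))).mp h2 j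
    (Finset.mem_univ j)
  exact pow_eq_zero_iff (n := 2) (by norm_num) |>.mp h3

lemma l2norm_pos' {n : ℕ} (x : Fin n → ℝ) (h : x ≠ 0) : 0 < l2norm x :=
  (l2norm_nonneg' x).lt_of_ne fun he => h (eq_zero_of_l2norm x he.symm)

lemma l2norm_add_le' {n : ℕ} (x y : Fin n → ℝ) : l2norm (x + y) ≤ l2norm x + l2norm y := by
  rw [l2norm_eq_norm, l2norm_eq_norm, l2norm_eq_norm, toE_add]; exact norm_add_le _ _

/-- Reverse triangle inequality for `l2norm`. -/
lemma l2norm_rev_tri {n : ℕ} (x y : Fin n → ℝ) : l2norm x - l2norm y ≤ l2norm (x + y) := by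
  have h := l2norm_add_le' (x + y) ((-1 : ℝ) • y)
  have h2 : (x + y) + (-1 : ℝ) • y = x := by module
  rw [h2, l2norm_smul'] at h
  simp only [abs_neg, abs_one, one_mul] at h
  linarith

/-- Cauchy–Schwarz for `l2norm`. -/
lemma l2norm_cs {n : ℕ} (x y : Fin n → ℝ) : ∑ i, x i * y i ≤ l2norm x * l2norm y := by
  rw [l2norm_eq_norm, l2norm_eq_norm]
  have := real_inner_le_norm (toE x) (toE y)
  simpa [PiLp.inner_apply, toE, RCLike.inner_apply, conj_trivial, mul_comm] using this

/-- The scalar soft-thresholding map. -/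
noncomputable def soft1 (θ : ℝ) (a : ℝ) : ℝ := Real.sign a * max (|a| - θ) 0

lemma soft1_eq (θ a : ℝ) (hθ : 0 ≤ θ) :
    soft1 θ a = max (a - θ) 0 + min (a + θ) 0 := by
  rcases lt_trichotomy a 0 with h | h | h
  · rw [soft1, Real.sign_of_neg h, abs_of_neg h,
      max_eq_right (le_of_lt (by linarith : a - θ < 0))]
    rcases le_total (a + θ) 0 with h2 | h2
    · rw [min_eq_left h2, max_eq_left (by linarith : (0:ℝ) ≤ -a - θ)]; ring
    · rw [min_eq_right h2, max_eq_right (by linarith : -a - θ ≤ (0:ℝ))]; ring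
  · simp [soft1, h, hθ]
  · rw [soft1, Real.sign_of_pos h, abs_of_pos h]
    rw [min_eq_right (by linarith)]; ring

lemma soft1_lip (θ a b : ℝ) (hθ : 0 ≤ θ) : |soft1 θ a - soft1 θ b| ≤ |a - b| := by
  rw [soft1_eq θ a hθ, soft1_eq θ b hθ]
  rcases le_total (a - θ) 0 with h1 | h1 <;> rcases le_total (b - θ) 0 with h2 | h2 <;>
    rcases le_total (a + θ) 0 with h3 | h3 <;> rcases le_total (b + θ) 0 with h4 | h4 <;>
    rcases abs_cases (a - b) with ⟨e, e'⟩ | ⟨e, e'⟩ <;>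
    simp only [max_eq_left, max_eq_right, min_eq_left, min_eq_right, h1, h2, h3, h4,
      max_eq_right_iff, min_eq_left_iff, abs_le, e] <;>
    constructor <;> linarith

/-- `soft` is nonexpansive in `l2norm`. -/
lemma soft_l2_lip {n : ℕ} (θ : ℝ) (hθ : 0 ≤ θ) (z z' : Fin n → ℝ) :
    l2norm (soft θ z - soft θ z') ≤ l2norm (z - z') := by
  unfold l2norm
  apply Real.sqrt_le_sqrt
  apply Finset.sum_le_sum
  intro i _
  have h : |soft1 θ (z i) - soft1 θ (z' i)| ≤ |z i - z' i| := soft1_lip θ _ _ hθ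
  have he : (soft θ z - soft θ z') i = soft1 θ (z i) - soft1 θ (z' i) := rfl
  rw [he, ← sq_abs, ← sq_abs ((z - z') i)]
  have he2 : (z - z') i = z i - z' i := rfl
  rw [he2]
  exact pow_le_pow_left₀ (abs_nonneg _) h 2

lemma adjsum {m n : ℕ} (A : Matrix (Fin m) (Fin n) ℝ) (g : Fin m → ℝ) (h : Fin n → ℝ) :
    ∑ j, (A.transpose.mulVec g) j * h j = ∑ i, g i * (A.mulVec h) i := by
  simp only [Matrix.mulVec, dotProduct, Matrix.transpose_apply, Finset.sum_mul,
    Finset.mul_sum]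
  rw [Finset.sum_comm]
  apply Finset.sum_congr rfl; intro i _
  apply Finset.sum_congr rfl; intro j _
  ring

lemma opNorm_bddAbove {m n : ℕ} (A : Matrix (Fin m) (Fin n) ℝ) :
    BddAbove {c : ℝ | ∃ x : Fin n → ℝ, l2norm x ≤ 1 ∧ c = l2norm (A.mulVec x)} := by
  refine ⟨Real.sqrt (∑ i, ∑ j, A i j ^ 2), ?_⟩
  rintro c ⟨y, hy, rfl⟩
  rw [l2norm]
  apply Real.sqrt_le_sqrt
  calc ∑ i, (A.mulVec y) i ^ 2 ≤ ∑ i, (∑ j, A i j ^ 2) * ∑ j, y j ^ 2 := by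
        apply Finset.sum_le_sum; intro i _
        simpa [Matrix.mulVec, dotProduct] using
          Finset.sum_mul_sq_le_sq_mul_sq Finset.univ (fun j => A i j) y
    _ ≤ ∑ i, ∑ j, A i j ^ 2 := by
        rw [← Finset.sum_mul]
        have hys : ∑ j, y j ^ 2 ≤ 1 := by
          rw [← l2norm_sq']; nlinarith [l2norm_nonneg' y]
        have hS : (0:ℝ) ≤ ∑ i, ∑ j, A i j ^ 2 :=
          Finset.sum_nonneg fun i _ => Finset.sum_nonneg fun j _ => sq_nonneg _
        have hys0 : (0:ℝ) ≤ ∑ j, y j ^ 2 :=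
          Finset.sum_nonneg fun j _ => sq_nonneg _
        nlinarith

lemma opNorm_nonneg' {m n : ℕ} (A : Matrix (Fin m) (Fin n) ℝ) : 0 ≤ opNorm A := by
  have h0 : (0:ℝ) ∈ {c : ℝ | ∃ x : Fin n → ℝ, l2norm x ≤ 1 ∧ c = l2norm (A.mulVec x)} := by
    refine ⟨0, ?_, ?_⟩ <;> simp [l2norm]
  exact le_csSup (opNorm_bddAbove A) h0

lemma opNorm_bound {m n : ℕ} (A : Matrix (Fin m) (Fin n) ℝ) (y : Fin n → ℝ) :
    l2norm (A.mulVec y) ≤ opNorm A * l2norm y := by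
  rcases eq_or_ne (l2norm y) 0 with h | h
  · have hy : y = 0 := eq_zero_of_l2norm y h
    simp [hy, h, l2norm, Matrix.mulVec_zero]
  · have hpos : 0 < l2norm y := lt_of_le_of_ne (l2norm_nonneg' y) (Ne.symm h)
    have hmem : l2norm (A.mulVec ((l2norm y)⁻¹ • y)) ≤ opNorm A := by
      apply le_csSup (opNorm_bddAbove A)
      exact ⟨_, by rw [l2norm_smul', abs_of_pos (by positivity), inv_mul_cancel₀ h], rfl⟩
    rw [Matrix.mulVec_smul, l2norm_smul', abs_of_pos (by positivity)] at hmem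
    calc l2norm (A.mulVec y) = l2norm y * ((l2norm y)⁻¹ * l2norm (A.mulVec y)) := by
          field_simp
      _ ≤ l2norm y * opNorm A := mul_le_mul_of_nonneg_left hmem (le_of_lt hpos)
      _ = opNorm A * l2norm y := mul_comm _ _

lemma opNorm_transpose_bound {m n : ℕ} (A : Matrix (Fin m) (Fin n) ℝ) (g : Fin m → ℝ) :
    l2norm (A.transpose.mulVec g) ≤ opNorm A * l2norm g := by
  set k := A.transpose.mulVec g with hk
  have h1 : l2norm k ^ 2 = ∑ j, k j * k j := by
    rw [l2norm_sq']; apply Finset.sum_congr rfl; intros; ring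
  have h2 : ∑ j, k j * k j = ∑ i, g i * (A.mulVec k) i := adjsum A g k
  have h3 : ∑ i, g i * (A.mulVec k) i ≤ l2norm g * l2norm (A.mulVec k) :=
    l2norm_cs g (A.mulVec k)
  have h4 : l2norm (A.mulVec k) ≤ opNorm A * l2norm k := opNorm_bound A k
  rcases (l2norm_nonneg' k).lt_or_eq with hpos | hzero
  · have key : l2norm k ^ 2 ≤ l2norm g * (opNorm A * l2norm k) := by
      calc l2norm k ^ 2 = ∑ i, g i * (A.mulVec k) i := h1.trans h2
        _ ≤ l2norm g * l2norm (A.mulVec k) := h3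
        _ ≤ l2norm g * (opNorm A * l2norm k) :=
            mul_le_mul_of_nonneg_left h4 (l2norm_nonneg' g)
    nlinarith [key, hpos]
  · rw [← hzero]
    exact mul_nonneg (opNorm_nonneg' A) (l2norm_nonneg' g)

lemma step_nonexpansive {m n : ℕ} (A : Matrix (Fin m) (Fin n) ℝ) (t : ℝ) (ht : 0 ≤ t)
    (htop : t * opNorm A ^ 2 ≤ 1) (h : Fin n → ℝ) :
    l2norm (h - t • (A.transpose.mulVec (A.mulVec h))) ≤ l2norm h := by
  set g := A.mulVec h with hg
  set k := A.transpose.mulVec g with hk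
  have hadj : ∑ j, k j * h j = ∑ i, g i * g i := by
    rw [hk, adjsum, ← hg]
  have hG0 : (0:ℝ) ≤ ∑ i, g i ^ 2 := Finset.sum_nonneg fun i _ => sq_nonneg _
  have hkb := opNorm_transpose_bound A g
  have hK : ∑ j, k j ^ 2 ≤ opNorm A ^ 2 * ∑ i, g i ^ 2 := by
    calc ∑ j, k j ^ 2 = l2norm k ^ 2 := (l2norm_sq' k).symm
      _ ≤ (opNorm A * l2norm g) ^ 2 := by nlinarith [l2norm_nonneg' k, hkb]
      _ = opNorm A ^ 2 * l2norm g ^ 2 := by ring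
      _ = opNorm A ^ 2 * ∑ i, g i ^ 2 := by rw [l2norm_sq']
  unfold l2norm
  apply Real.sqrt_le_sqrt
  have hexp : ∀ j, (h - t • k) j = h j - t * k j := fun j => rfl
  simp only [hexp]
  have expand : ∑ j, (h j - t * k j) ^ 2
      = ∑ j, h j ^ 2 - 2 * t * (∑ j, k j * h j) + t ^ 2 * ∑ j, k j ^ 2 := by
    rw [Finset.mul_sum, Finset.mul_sum, ← Finset.sum_sub_distrib, ← Finset.sum_add_distrib]
    apply Finset.sum_congr rfl; intro j _; ring
  have hgg : ∑ i, g i * g i = ∑ i, g i ^ 2 := by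
    apply Finset.sum_congr rfl; intros; ring
  rw [expand, hadj, hgg]
  nlinarith [mul_le_mul_of_nonneg_left hK (sq_nonneg t),
    mul_le_mul_of_nonneg_right htop (mul_nonneg ht hG0),
    mul_nonneg ht hG0]

/-- Lemma 2: the iterate increment controls both proximal steps. -/
theorem hcista_lemma2 {M N : ℕ} (hM : 0 < M) (hN : 0 < N)
    (A : Matrix (Fin M) (Fin N) ℝ) (hA : A ≠ 0) (b : Fin M → ℝ)
    (lam t : ℝ) (hlam : 0 < lam) (ht : 0 < t) (ht' : t ≤ 1 / (opNorm A) ^ 2)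
    (x u v w xp : Fin N → ℝ) (α : ℝ) (hα1 : 0 < α) (hα2 : α < 1)
    (hv : v = soft (lam * t) (x - t • gradf A b x))
    (hw : w = soft (lam * t) (u - t • gradf A b u))
    (hxp : xp = α • v + (1 - α) • w)
    (hvx : v ≠ x) (η : ℝ) (hη : η = l2norm (u - x) / l2norm (v - x)) :
    ∀ a b' : ℝ, 0 < a → 0 < b' →
      (a - η * (2 * a * (1 - α) + 2 * b' * α)) * l2norm (v - x) + b' * l2norm (w - x) ≤
        (a + b') * l2norm (xp - x) := by
  intro a b' ha hb'
  -- operator norm is positive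
  have hop0 : 0 ≤ opNorm A := opNorm_nonneg' A
  have hop : 0 < opNorm A := by
    rcases hop0.lt_or_eq with h | h
    · exact h
    · exfalso; rw [← h] at ht'; simp at ht'; linarith
  have htop : t * opNorm A ^ 2 ≤ 1 := by
    rw [le_div_iff₀ (by positivity)] at ht'
    linarith
  -- the difference of the two proximal arguments
  have harg : (u - t • gradf A b u) - (x - t • gradf A b x)
      = (u - x) - t • (A.transpose.mulVec (A.mulVec (u - x))) := by
    simp only [gradf, Matrix.mulVec_sub]
    module
  -- soft-thresholding plus gradient step is nonexpansive
  have hwv : l2norm (w - v) ≤ l2norm (u - x) := by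
    rw [hw, hv]
    calc l2norm (soft (lam * t) (u - t • gradf A b u) - soft (lam * t) (x - t • gradf A b x))
        ≤ l2norm ((u - t • gradf A b u) - (x - t • gradf A b x)) :=
          soft_l2_lip (lam * t) (le_of_lt (mul_pos hlam ht)) _ _
      _ = l2norm ((u - x) - t • (A.transpose.mulVec (A.mulVec (u - x)))) := by rw [harg]
      _ ≤ l2norm (u - x) := step_nonexpansive A t ht.le htop (u - x)
  set p := l2norm (v - x) with hpdef
  set q := l2norm (w - x) with hqdef
  set r := l2norm (xp - x) with hrdef
  set L := l2norm (w - v) with hLdef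
  have hp : 0 < p := l2norm_pos' _ (sub_ne_zero.mpr hvx)
  have hd : l2norm (u - x) = η * p := by
    rw [hη]; field_simp
  have hL : L ≤ η * p := hd ▸ hwv
  have hL0 : 0 ≤ L := l2norm_nonneg' _
  have hq0 : 0 ≤ q := l2norm_nonneg' _
  have hη0 : 0 ≤ η := by
    rw [hη]; exact div_nonneg (l2norm_nonneg' _) (l2norm_nonneg' _)
  have hid1 : xp - x = (v - x) + (1 - α) • (w - v) := by
    rw [hxp]; module
  have hid2 : xp - x = (w - x) + (-α) • (w - v) := by
    rw [hxp]; module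
  have hr1 : p - (1 - α) * L ≤ r := by
    have := l2norm_rev_tri (v - x) ((1 - α) • (w - v))
    rw [← hid1, l2norm_smul', abs_of_pos (by linarith : (0:ℝ) < 1 - α)] at this
    linarith
  have hr2 : q - α * L ≤ r := by
    have := l2norm_rev_tri (w - x) ((-α) • (w - v))
    rw [← hid2, l2norm_smul', abs_of_neg (by linarith : -α < (0:ℝ)), neg_neg] at this
    linarith
  -- combine
  have hcoef : 0 ≤ a * (1 - α) + b' * α := by nlinarith
  nlinarith [mul_le_mul_of_nonneg_left hr1 ha.le, mul_le_mul_of_nonneg_left hr2 hb'.le,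
    mul_le_mul_of_nonneg_left hL hcoef,
    mul_nonneg (mul_nonneg hcoef hη0) hp.le]
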